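/- Under the same setup, the block curvature on the i-th simplex factor satisfies Cf^(i) ≤ 4R²/(λn²), and hence the product curvature constant C_f^⊗ = Σ_{i=1}^n Cf^(i) satisfies C_f^⊗ ≤ 4R²/(λn), which is n times smaller than the bound 4R²/λ on the full curvature Cf. -/

import Mathlib

open RealInnerProductSpace

/-- For the structural SVM dual over the product of simplices, each block
curvature satisfies `Cf⁽ⁱ⁾ ≤ 4R²/(λn²)`, hence the product curvature constant
`Cf^⊗ = Σᵢ Cf⁽ⁱ⁾` satisfies `Cf^⊗ ≤ 4R²/(λn)`. -/
theorem svm_block_curvature_bound {d n : ℕ} (hn : 1 ≤ n)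
    (lam R : ℝ) (hlam : 0 < lam)
    (k : Fin n → ℕ) (hk : ∀ i, 1 ≤ k i)
    (ψ : ∀ i : Fin n, Fin (k i) → EuclideanSpace ℝ (Fin d))
    (L : ∀ i : Fin n, Fin (k i) → ℝ)
    (hR : ∀ i y, ‖ψ i y‖ ≤ R)
    (Amul : (∀ i : Fin n, Fin (k i) → ℝ) → EuclideanSpace ℝ (Fin d))
    (hAmul : ∀ α, Amul α = ∑ i, ∑ y, (α i y / (lam * n)) • ψ i y)
    (f : (∀ i : Fin n, Fin (k i) → ℝ) → ℝ)
    (hf : ∀ α, f α = lam / 2 * ‖Amul α‖ ^ 2 - ∑ i, ∑ y, (L i y / n) * α i y)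
    (gradf : (∀ i : Fin n, Fin (k i) → ℝ) → (∀ i : Fin n, Fin (k i) → ℝ))
    (hgrad : ∀ α i y, gradf α i y = lam * (⟪Amul α, ψ i y⟫ / (lam * n)) - L i y / n)
    (Dset : Set (∀ i : Fin n, Fin (k i) → ℝ))
    (hD : Dset = {α | ∀ i, α i ∈ stdSimplex ℝ (Fin (k i))})
    (Cfi : Fin n → ℝ)
    (hCfi : ∀ i, Cfi i = sSup {c : ℝ | ∃ x ∈ Dset, ∃ si ∈ stdSimplex ℝ (Fin (k i)),
        ∃ γ ∈ Set.Ioc (0 : ℝ) 1,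
        c = 2 / γ ^ 2 * (f (Function.update x i (x i + γ • (si - x i))) - f x
              - ∑ y, (γ * (si y - x i y)) * gradf x i y)}) :
    (∀ i, Cfi i ≤ 4 * R ^ 2 / (lam * n ^ 2)) ∧
      (∑ i, Cfi i) ≤ 4 * R ^ 2 / (lam * n) := by
  have hnpos : (0 : ℝ) < n := by exact_mod_cast Nat.lt_of_lt_of_le Nat.zero_lt_one hn
  have hn0 : (n : ℝ) ≠ 0 := ne_of_gt hnpos
  have hlam0 : lam ≠ 0 := ne_of_gt hlam
  have hbnd0 : (0 : ℝ) ≤ 4 * R ^ 2 / (lam * n ^ 2) :=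
    div_nonneg (by positivity) (mul_nonneg hlam.le (by positivity))
  have key : ∀ i, Cfi i ≤ 4 * R ^ 2 / (lam * n ^ 2) := by
    intro i
    rw [hCfi]
    apply Real.sSup_le _ hbnd0
    rintro c ⟨x, hx, si, hsi, γ, hγ, rfl⟩
    rw [hD] at hx
    have hγ0 : γ ≠ 0 := ne_of_gt hγ.1
    set v : EuclideanSpace ℝ (Fin d) := ∑ y, (si y - x i y) • ψ i y with hv
    set x' := Function.update x i (x i + γ • (si - x i)) with hx'
    have hxy : ∀ y, x' i y = x i y + γ * (si y - x i y) := by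
      intro y
      simp [hx', Function.update_self]
    have hA' : Amul x' = Amul x + (γ / (lam * n)) • v := by
      have hterm : ∀ j : Fin n,
          (∑ y, (x' j y / (lam * n)) • ψ j y)
            = (∑ y, (x j y / (lam * n)) • ψ j y)
              + (if j = i then (γ / (lam * n)) • v else 0) := by
        intro j
        by_cases hji : j = i
        · subst hji
          rw [if_pos rfl, hv, Finset.smul_sum, ← Finset.sum_add_distrib]
          refine Finset.sum_congr rfl fun y _ => ?_
          rw [hxy y, smul_smul, ← add_smul]
          congr 1
          field_simp
        · rw [if_neg hji, add_zero]
          have hxx : x' j = x j := Function.update_of_ne hji _ _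
          rw [hxx]
      rw [hAmul, hAmul]
      rw [Finset.sum_congr rfl fun j _ => hterm j, Finset.sum_add_distrib,
        Finset.sum_ite_eq' Finset.univ i _]
      simp
    have hL' : (∑ j, ∑ y, (L j y / n) * x' j y)
        = (∑ j, ∑ y, (L j y / n) * x j y) + γ / n * ∑ y, L i y * (si y - x i y) := by
      have hterm : ∀ j : Fin n, (∑ y, (L j y / n) * x' j y)
          = (∑ y, (L j y / n) * x j y)
            + (if j = i then γ / n * ∑ y, L i y * (si y - x i y) else 0) := by
        intro j
        by_cases hji : j = i
        · subst hji
          rw [if_pos rfl, Finset.mul_sum, ← Finset.sum_add_distrib]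
          refine Finset.sum_congr rfl fun y _ => ?_
          rw [hxy y]
          field_simp
        · rw [if_neg hji, add_zero]
          have hxx : x' j = x j := Function.update_of_ne hji _ _
          rw [hxx]
      rw [Finset.sum_congr rfl fun j _ => hterm j, Finset.sum_add_distrib,
        Finset.sum_ite_eq' Finset.univ i _]
      simp
    have hiv : ⟪Amul x, v⟫ = ∑ y, (si y - x i y) * ⟪Amul x, ψ i y⟫ := by
      rw [hv, inner_sum]
      exact Finset.sum_congr rfl fun y _ => real_inner_smul_right _ _ _
    have hnormsq : ‖Amul x + (γ / (lam * n)) • v‖ ^ 2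
        = ‖Amul x‖ ^ 2 + 2 * ((γ / (lam * n)) * ⟪Amul x, v⟫)
          + (γ / (lam * n)) ^ 2 * ‖v‖ ^ 2 := by
      rw [norm_add_sq_real, real_inner_smul_right, norm_smul, mul_pow,
        Real.norm_eq_abs, sq_abs]
    have hg : (∑ y, (γ * (si y - x i y)) * gradf x i y)
        = γ / n * ⟪Amul x, v⟫ - γ / n * ∑ y, L i y * (si y - x i y) := by
      rw [hiv, Finset.mul_sum, Finset.mul_sum, ← Finset.sum_sub_distrib]
      refine Finset.sum_congr rfl fun y _ => ?_
      rw [hgrad]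
      field_simp
    have hval : 2 / γ ^ 2 * (f x' - f x - ∑ y, (γ * (si y - x i y)) * gradf x i y)
        = ‖v‖ ^ 2 / (lam * n ^ 2) := by
      rw [hf, hf, hA', hnormsq, hL', hg]
      field_simp
      ring
    rw [hval]
    have hvle : ‖v‖ ≤ 2 * R := by
      calc ‖v‖ ≤ ∑ y, ‖(si y - x i y) • ψ i y‖ := norm_sum_le _ _
        _ ≤ ∑ y, (si y + x i y) * R := by
            refine Finset.sum_le_sum fun y _ => ?_
            rw [norm_smul, Real.norm_eq_abs]
            have h1 : |si y - x i y| ≤ si y + x i y := by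
              have h2 : |si y - x i y| ≤ |si y| + |x i y| := abs_sub _ _
              rwa [abs_of_nonneg (hsi.1 y), abs_of_nonneg ((hx i).1 y)] at h2
            exact mul_le_mul h1 (hR i y) (norm_nonneg _)
              (add_nonneg (hsi.1 y) ((hx i).1 y))
        _ = 2 * R := by
            rw [← Finset.sum_mul, Finset.sum_add_distrib, hsi.2, (hx i).2]
            ring
    have hv2 : ‖v‖ ^ 2 ≤ 4 * R ^ 2 := by nlinarith [norm_nonneg v]
    have hden : (0 : ℝ) < lam * n ^ 2 := by positivity
    exact div_le_div_of_nonneg_right hv2 hden.le |>.trans_eq rfl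
  refine ⟨key, ?_⟩
  calc (∑ i, Cfi i) ≤ ∑ _i : Fin n, 4 * R ^ 2 / (lam * n ^ 2) :=
        Finset.sum_le_sum fun i _ => key i
    _ = n * (4 * R ^ 2 / (lam * n ^ 2)) := by
        rw [Finset.sum_const, Finset.card_univ, Fintype.card_fin, nsmul_eq_mul]
    _ = 4 * R ^ 2 / (lam * n) := by
        field_simp
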